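/- Define f : ℝ² → ℝ² on real points by f(x₁,x₂) = ((x₁² − x₂²)/2, log |x₁x₂ + 1|). Then the restriction of f to the connected component S = {(x₁,x₂) ∈ ℝ² : x₁ > 0 and x₁x₂ + 1 < 0} of the fixed locus of complex conjugation is a bijection from S onto ℝ². In other words, this component of the fixed locus is a section of the Lagrangian fibration f(z₁,z₂) = ((|z₁|²−|z₂|²)/2, log|z₁z₂+1|). -/

import Mathlib

/-- The nodal fibration restricted to real points:
`f(x₁,x₂) = ((x₁² − x₂²)/2, log |x₁x₂ + 1|)`. -/
noncomputable def f4 (x : ℝ × ℝ) : ℝ × ℝ :=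
  ((x.1 ^ 2 - x.2 ^ 2) / 2, Real.log |x.1 * x.2 + 1|)

/-- The connected component `S = {x₁ > 0, x₁x₂ + 1 < 0}` of the fixed locus of
conjugation maps bijectively onto `ℝ²`: it is a section of the nodal fibration. -/
theorem stmt4 :
    Set.BijOn f4 {x : ℝ × ℝ | 0 < x.1 ∧ x.1 * x.2 + 1 < 0} Set.univ := by
  refine ⟨Set.mapsTo_univ _ _, ?_, ?_⟩
  · -- injectivity
    rintro ⟨x1, x2⟩ ⟨hx1, hx2⟩ ⟨y1, y2⟩ ⟨hy1, hy2⟩ hf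
    simp only [f4, Prod.mk.injEq] at hf
    obtain ⟨h1, h2⟩ := hf
    simp only at hx1 hx2 hy1 hy2
    have hxabs : |x1 * x2 + 1| = -(x1 * x2 + 1) := abs_of_neg hx2
    have hyabs : |y1 * y2 + 1| = -(y1 * y2 + 1) := abs_of_neg hy2
    have hk : x1 * x2 = y1 * y2 := by
      have e1 : Real.exp (Real.log |x1 * x2 + 1|) = Real.exp (Real.log |y1 * y2 + 1|) := by
        rw [h2]
      rw [Real.exp_log (by rw [hxabs]; linarith), Real.exp_log (by rw [hyabs]; linarith)] at e1
      rw [hxabs, hyabs] at e1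
      linarith
    have key : (x1 ^ 2 - y1 ^ 2) * (x1 ^ 2 * y1 ^ 2 + (x1 * x2) ^ 2) = 0 := by
      linear_combination (2 * x1 ^ 2 * y1 ^ 2) * h1 + x1 ^ 2 * (x1 * x2 + y1 * y2) * hk
    have hpos : 0 < x1 ^ 2 * y1 ^ 2 + (x1 * x2) ^ 2 := by positivity
    have hsq : x1 ^ 2 = y1 ^ 2 := by
      have := mul_eq_zero.mp key
      rcases this with h | h
      · linarith
      · linarith
    have hx1y1 : x1 = y1 := by nlinarith [sq_nonneg (x1 - y1)]
    have hx2y2 : x2 = y2 := by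
      have hx1ne : x1 ≠ 0 := ne_of_gt hx1
      field_simp [hx1y1] at hk
      have h3 : x1 * x2 = x1 * y2 := by rw [hx1y1] at hk ⊢; linarith
      exact mul_left_cancel₀ hx1ne h3
    simp [hx1y1, hx2y2]
  · -- surjectivity
    rintro ⟨a, b⟩ -
    set c : ℝ := 1 + Real.exp b with hc_def
    have hc : 1 < c := by have := Real.exp_pos b; simp [hc_def]; linarith
    set s : ℝ := Real.sqrt (a ^ 2 + c ^ 2) with hs_def
    have hs2 : s ^ 2 = a ^ 2 + c ^ 2 := Real.sq_sqrt (by positivity)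
    have hsnn : 0 ≤ s := Real.sqrt_nonneg _
    have ht : 0 < a + s := by nlinarith
    set t : ℝ := a + s with ht_def
    set x1 : ℝ := Real.sqrt t with hx1_def
    have hx1sq : x1 ^ 2 = t := Real.sq_sqrt ht.le
    have hx1pos : 0 < x1 := Real.sqrt_pos.mpr ht
    have hx1ne : x1 ≠ 0 := ne_of_gt hx1pos
    refine ⟨(x1, -c / x1), ⟨hx1pos, ?_⟩, ?_⟩
    · show x1 * (-c / x1) + 1 < 0
      rw [mul_div_assoc', mul_comm, mul_div_assoc, div_self hx1ne]
      linarith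
    · have hmul : x1 * (-c / x1) = -c := by field_simp
      have hquad : t ^ 2 = 2 * a * t + c ^ 2 := by
        rw [ht_def]; nlinarith
      simp only [f4, Prod.mk.injEq, hmul]
      constructor
      · have : (-c / x1) ^ 2 = c ^ 2 / t := by
          rw [div_pow, neg_pow, hx1sq]; ring_nf
        rw [this, hx1sq]
        field_simp
        nlinarith
      · have : |-c + 1| = Real.exp b := by
          rw [abs_of_neg (by linarith)]; simp [hc_def]
        rw [this, Real.log_exp]
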